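/- Let α > 0, β > 0 be real numbers and n ∈ ℕ. Then for all z > 0 the Turán type inequality E^n_{α,β}(z)·E^{n+2}_{α,β}(z) ≤ [E^{n+1}_{α,β}(z)]² holds. -/

import Mathlib

open Real Filter Finset

/-- Log-convexity of Gamma: balanced products dominate. -/
lemma gamma_pair (x d e : ℝ) (hx : 0 < x) (hd : 0 < d) (hde : d ≤ e) :
    Real.Gamma (x + d) * Real.Gamma (x + e) ≤ Real.Gamma x * Real.Gamma (x + d + e) := by
  have hconv := Real.convexOn_log_Gamma
  have hb : (0:ℝ) < x + d + e := by linarith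
  have ht0 : (0:ℝ) < d + e := by linarith
  set t := d / (d + e) with htdef
  have ht : 0 ≤ t := by positivity
  have ht1 : t ≤ 1 := by
    rw [htdef, div_le_one ht0]; linarith
  have htde : t * (d + e) = d := div_mul_cancel₀ d ht0.ne'
  have h1 : (1 - t) * x + t * (x + d + e) = x + d := by linear_combination htde
  have h2 : t * x + (1 - t) * (x + d + e) = x + e := by linear_combination -htde
  have hcv := hconv.2
  have k1 := hcv (Set.mem_Ioi.2 hx) (Set.mem_Ioi.2 hb) (a := 1 - t) (b := t)
    (by linarith) ht (by ring)
  have k2 := hcv (Set.mem_Ioi.2 hx) (Set.mem_Ioi.2 hb) (a := t) (b := 1 - t)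
    ht (by linarith) (by ring)
  simp only [smul_eq_mul, Function.comp_apply] at k1 k2
  rw [h1] at k1
  rw [h2] at k2
  have hsum : Real.log (Real.Gamma (x + d)) + Real.log (Real.Gamma (x + e)) ≤
      Real.log (Real.Gamma x) + Real.log (Real.Gamma (x + d + e)) := by nlinarith
  have g1 := Real.Gamma_pos_of_pos (show (0:ℝ) < x + d by linarith)
  have g2 := Real.Gamma_pos_of_pos (show (0:ℝ) < x + e by linarith)
  have g3 := Real.Gamma_pos_of_pos hx
  have g4 := Real.Gamma_pos_of_pos hb
  calc Real.Gamma (x + d) * Real.Gamma (x + e)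
      = Real.exp (Real.log (Real.Gamma (x + d)) + Real.log (Real.Gamma (x + e))) := by
        rw [Real.exp_add, Real.exp_log g1, Real.exp_log g2]
    _ ≤ Real.exp (Real.log (Real.Gamma x) + Real.log (Real.Gamma (x + d + e))) :=
        Real.exp_le_exp.2 hsum
    _ = Real.Gamma x * Real.Gamma (x + d + e) := by
        rw [Real.exp_add, Real.exp_log g3, Real.exp_log g4]

/-- Growth of Gamma: `Γ(x+a) ≥ Γ(x)·(x-1)^a` for `x ≥ 2`. -/
lemma gamma_growth (x a : ℝ) (hx : 2 ≤ x) (ha : 0 < a) :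
    Real.Gamma x * (x - 1) ^ a ≤ Real.Gamma (x + a) := by
  have hx1 : (0:ℝ) < x - 1 := by linarith
  have hslope := Real.convexOn_log_Gamma.slope_mono_adjacent
    (Set.mem_Ioi.2 hx1) (Set.mem_Ioi.2 (show (0:ℝ) < x + a by linarith))
    (show x - 1 < x by linarith) (show x < x + a by linarith)
  simp only [Function.comp_apply] at hslope
  have hgx : Real.Gamma x = (x - 1) * Real.Gamma (x - 1) := by
    have := Real.Gamma_add_one (show x - 1 ≠ 0 by linarith)
    rw [sub_add_cancel] at this
    exact this
  have hΓ1 := Real.Gamma_pos_of_pos hx1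
  have hlog : Real.log (Real.Gamma x) - Real.log (Real.Gamma (x - 1)) = Real.log (x - 1) := by
    rw [hgx, Real.log_mul (by linarith) hΓ1.ne']; ring
  rw [show x - (x - 1) = 1 by ring, div_one, hlog, show x + a - x = a by ring] at hslope
  have key : Real.log (Real.Gamma x) + a * Real.log (x - 1) ≤
      Real.log (Real.Gamma (x + a)) := by
    rw [le_div_iff₀ ha] at hslope
    nlinarith
  have hΓx := Real.Gamma_pos_of_pos (show (0:ℝ) < x by linarith)
  calc Real.Gamma x * (x - 1) ^ a
      = Real.exp (Real.log (Real.Gamma x) + a * Real.log (x - 1)) := by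
        rw [Real.exp_add, Real.exp_log hΓx, Real.rpow_def_of_pos hx1, mul_comm a]
    _ ≤ Real.exp (Real.log (Real.Gamma (x + a))) := Real.exp_le_exp.2 key
    _ = Real.Gamma (x + a) :=
        Real.exp_log (Real.Gamma_pos_of_pos (by linarith))

lemma summable_ml (α c z : ℝ) (hα : 0 < α) (hc : 0 < c) (hz : 0 < z) :
    Summable (fun k : ℕ => z ^ k / Real.Gamma (α * k + c)) := by
  apply summable_of_ratio_norm_eventually_le (r := 1/2) (by norm_num)
  have htend : Tendsto (fun k : ℕ => α * k + c) atTop atTop := by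
    apply tendsto_atTop_add_const_right
    exact (tendsto_natCast_atTop_atTop (R := ℝ)).const_mul_atTop hα
  filter_upwards [htend.eventually_ge_atTop (max 2 ((2 * z) ^ (1/α) + 1))] with k hk
  set x := α * (k : ℝ) + c with hxdef
  have hx2 : 2 ≤ x := le_trans (le_max_left _ _) hk
  have hxz : (2 * z) ^ (1/α) ≤ x - 1 := by
    have := le_trans (le_max_right _ _) hk; linarith
  have h2z : 2 * z ≤ (x - 1) ^ α := by
    have heq : ((2*z) ^ (1/α)) ^ α = 2*z := by
      rw [← Real.rpow_mul (by positivity), one_div, inv_mul_cancel₀ hα.ne', Real.rpow_one]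
    calc 2 * z = ((2*z) ^ (1/α)) ^ α := heq.symm
      _ ≤ (x - 1) ^ α := Real.rpow_le_rpow (Real.rpow_nonneg (by linarith) _) hxz hα.le
  have hΓx := Real.Gamma_pos_of_pos (show (0:ℝ) < x by linarith)
  have hΓxa := Real.Gamma_pos_of_pos (show (0:ℝ) < x + α by linarith)
  have hgrow : 2 * z * Real.Gamma x ≤ Real.Gamma (x + α) := by
    have h1 := gamma_growth x α hx2 hα
    nlinarith
  have hcast : α * ((k : ℕ) + 1 : ℕ) + c = x + α := by push_cast [hxdef]; ring
  rw [hcast]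
  have hzk : (0:ℝ) < z ^ k := pow_pos hz k
  rw [Real.norm_eq_abs, Real.norm_eq_abs, abs_of_pos (by positivity), abs_of_pos (by positivity)]
  have step1 : z ^ (k+1) / Real.Gamma (x + α) ≤ z ^ (k+1) / (2 * z * Real.Gamma x) :=
    div_le_div_of_nonneg_left (by positivity) (by positivity) hgrow
  have step2 : z ^ (k+1) / (2 * z * Real.Gamma x) = 1/2 * (z ^ k / Real.Gamma x) := by
    rw [pow_succ]; field_simp
  linarith

/-- The Mittag-Leffler function `E_{α,β}(z) = ∑_{n=0}^∞ z^n / Γ(α n + β)`. -/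
noncomputable def mittagLeffler (α β z : ℝ) : ℝ :=
  ∑' n : ℕ, z ^ n / Real.Gamma (α * n + β)

/-- The `n`-th remainder of the Mittag-Leffler series:
`E^n_{α,β}(z) = ∑_{k=n+1}^∞ z^k / Γ(α k + β)`. -/
noncomputable def mittagLefflerRem (α β : ℝ) (n : ℕ) (z : ℝ) : ℝ :=
  ∑' k : ℕ, z ^ (n + 1 + k) / Real.Gamma (α * (n + 1 + k) + β)

set_option maxHeartbeats 1000000 in
/-- Turán type inequality for remainders of the Mittag-Leffler series. -/
theorem mittagLefflerRem_turan (α β : ℝ) (hα : 0 < α) (hβ : 0 < β) (n : ℕ) :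
    ∀ z : ℝ, 0 < z →
      mittagLefflerRem α β n z * mittagLefflerRem α β (n + 2) z ≤
        (mittagLefflerRem α β (n + 1) z) ^ 2 := by
  intro z hz
  obtain ⟨u, hu⟩ : ∃ u : ℕ → ℝ,
      ∀ k : ℕ, u k = z ^ (n + 1 + k) / Real.Gamma (α * (n + 1 + k) + β) :=
    ⟨_, fun k => rfl⟩
  have hupos : ∀ k, 0 < u k := by
    intro k
    rw [hu k]
    have h1 : (0:ℝ) < α * (n + 1 + k) + β := by positivity
    exact div_pos (pow_pos hz _) (Real.Gamma_pos_of_pos h1)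
  have hSu : Summable u := by
    have h := (summable_ml α (α * (n+1) + β) z hα (by positivity) hz).mul_left (z ^ (n+1))
    refine h.congr fun k => ?_
    rw [hu k, ← mul_div_assoc, ← pow_add]
    congr 2
    push_cast; ring
  have hS1 : Summable (fun k => u (k + 1)) := (summable_nat_add_iff 1).2 hSu
  have hS2 : Summable (fun k => u (k + 2)) := (summable_nat_add_iff 2).2 hSu
  have h0 : mittagLefflerRem α β n z = ∑' k, u k :=
    tsum_congr fun k => (hu k).symm
  have h1 : mittagLefflerRem α β (n + 1) z = ∑' k, u (k + 1) := by
    refine tsum_congr fun k => ?_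
    rw [hu (k + 1), show n + 1 + (k + 1) = n + 1 + 1 + k from by omega]
    congr 3
    push_cast; ring
  have h2 : mittagLefflerRem α β (n + 2) z = ∑' k, u (k + 2) := by
    refine tsum_congr fun k => ?_
    rw [hu (k + 2), show n + 1 + (k + 2) = n + 2 + 1 + k from by omega]
    congr 3
    push_cast; ring
  rw [h0, h1, h2, sq]
  have norm_of : ∀ (f : ℕ → ℝ), Summable f → (∀ k, 0 < f k) →
      Summable (fun k => ‖f k‖) := by
    intro f hf hfpos
    refine hf.congr fun k => ?_
    rw [Real.norm_eq_abs, abs_of_pos (hfpos k)]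
  have nSu := norm_of u hSu hupos
  have nS1 := norm_of _ hS1 (fun k => hupos _)
  have nS2 := norm_of _ hS2 (fun k => hupos _)
  have S1 : Summable fun n : ℕ => ∑ kl ∈ antidiagonal n, u kl.1 * u (kl.2 + 2) :=
    summable_sum_mul_antidiagonal_of_summable_norm' (f := u) (g := fun k => u (k + 2))
      nSu hSu nS2 hS2
  have S2 : Summable fun n : ℕ => ∑ kl ∈ antidiagonal n, u (kl.1 + 1) * u (kl.2 + 1) :=
    summable_sum_mul_antidiagonal_of_summable_norm' (f := fun k => u (k + 1))
      (g := fun k => u (k + 1)) nS1 hS1 nS1 hS1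
  have E1 : (∑' k, u k) * (∑' k, u (k + 2)) =
      ∑' n : ℕ, ∑ kl ∈ antidiagonal n, u kl.1 * u (kl.2 + 2) :=
    tsum_mul_tsum_eq_tsum_sum_antidiagonal_of_summable_norm (f := u) (g := fun k => u (k + 2))
      nSu nS2
  have E2 : (∑' k, u (k + 1)) * (∑' k, u (k + 1)) =
      ∑' n : ℕ, ∑ kl ∈ antidiagonal n, u (kl.1 + 1) * u (kl.2 + 1) :=
    tsum_mul_tsum_eq_tsum_sum_antidiagonal_of_summable_norm (f := fun k => u (k + 1))
      (g := fun k => u (k + 1)) nS1 nS1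
  rw [E1, E2]
  refine Summable.tsum_le_tsum (fun m => ?_) S1 S2
  -- coefficientwise inequality
  rw [Finset.Nat.sum_antidiagonal_eq_sum_range_succ_mk,
      Finset.Nat.sum_antidiagonal_eq_sum_range_succ_mk]
  have hL : ∀ i ∈ range (m + 1), u i * u (m - i + 2) = u i * u (m + 2 - i) := by
    intro i hi
    rw [Finset.mem_range] at hi
    congr 2
    omega
  have hR : ∀ i ∈ range (m + 1), u (i + 1) * u (m - i + 1) =
      u (i + 1) * u (m + 2 - (i + 1)) := by
    intro i hi
    rw [Finset.mem_range] at hi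
    congr 2
    omega
  rw [Finset.sum_congr rfl hL, Finset.sum_congr rfl hR]
  have e1 := Finset.sum_range_succ' (fun i => u i * u (m + 2 - i)) (m + 1)
  have e2 := Finset.sum_range_succ (fun i => u i * u (m + 2 - i)) (m + 1)
  beta_reduce at e1 e2 ⊢
  have hkey : u 0 * u (m + 2 - 0) ≤ u (m + 1) * u (m + 2 - (m + 1)) := by
    rw [Nat.sub_zero, show m + 2 - (m + 1) = 1 from by omega, mul_comm (u (m + 1)),
      hu 0, hu (m + 2), hu 1, hu (m + 1)]
    rw [div_mul_div_comm, div_mul_div_comm, ← pow_add, ← pow_add,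
      show n + 1 + 0 + (n + 1 + (m + 2)) = n + 1 + 1 + (n + 1 + (m + 1)) from by omega]
    apply div_le_div_of_nonneg_left (by positivity) (by positivity)
    have hm : (0:ℝ) ≤ (m:ℝ) := Nat.cast_nonneg m
    have hle : α ≤ ((m:ℝ) + 1) * α := by nlinarith
    have base := gamma_pair (α * ((n:ℝ) + 1) + β) α (((m:ℝ) + 1) * α) (by positivity) hα hle
    show (_:ℝ) ≤ _
    convert base using 3 <;> push_cast <;> ring
  linarith [e1, e2, hkey]
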